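/- Let λ be a Young diagram with n = |λ| boxes and let u, v be arbitrary complex numbers. Then ∑_{Λ : λ ↗ Λ} (c(b) + u)(c(b) + v) · dim Λ = (n + uv)(n + 1) · dim λ, where the sum runs over all Young diagrams Λ obtained from λ by adding one box b = Λ∖λ, and c(b) = j − i is the content of the added box. Equivalently, the numbers p_{u,v}(λ,Λ) = (c(b)+u)(c(b)+v) dim Λ / ((n+uv)(n+1) dim λ) sum to 1 over Λ with λ ↗ Λ. -/

import Mathlib

/-- `ν` is obtained from `μ` by adding a single box (`μ ↗ ν`). -/
def YDCovers (μ ν : YoungDiagram) : Prop :=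
  ∃ c ∉ μ.cells, ν.cells = insert c μ.cells

/-- `dim λ`: the number of standard Young tableaux of shape `λ`, i.e. the number of
chains `∅ = λ⁰ ↗ λ¹ ↗ ⋯ ↗ λⁿ = λ` in the Young lattice. -/
noncomputable def dimYD (μ : YoungDiagram) : ℕ :=
  Nat.card {L : List YoungDiagram //
    List.Chain' YDCovers L ∧ L.head? = some ⊥ ∧ L.getLast? = some μ}

namespace ZM
open Finset YoungDiagram

lemma yd_ext {μ ν : YoungDiagram} (h : μ.cells = ν.cells) : μ = ν := by
  cases μ; cases ν; simpa using h

lemma covers_card {μ ν : YoungDiagram} (h : YDCovers μ ν) : ν.card = μ.card + 1 := by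
  obtain ⟨c, hc, hcells⟩ := h
  simp [YoungDiagram.card, hcells, Finset.card_insert_of_notMem hc]

lemma covers_ne_bot {μ ν : YoungDiagram} (h : YDCovers μ ν) : ν ≠ ⊥ := by
  obtain ⟨c, hc, hcells⟩ := h
  intro hb
  rw [hb, YoungDiagram.cells_bot] at hcells
  exact absurd hcells.symm (by simp)

lemma not_covers_bot {μ : YoungDiagram} : ¬ YDCovers μ ⊥ := fun h => covers_ne_bot h rfl

lemma rowLen_pos_iff {μ : YoungDiagram} {i : ℕ} : 0 < μ.rowLen i ↔ i < μ.colLen 0 := by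
  rw [← YoungDiagram.mem_iff_lt_rowLen, YoungDiagram.mem_iff_lt_colLen]

/-- Row `i` has an addable corner. -/
abbrev Addable (μ : YoungDiagram) (i : ℕ) : Prop :=
  i = 0 ∨ μ.rowLen i < μ.rowLen (i - 1)

/-- Row `i` has a removable corner. -/
abbrev Removable (μ : YoungDiagram) (i : ℕ) : Prop :=
  μ.rowLen (i + 1) < μ.rowLen i

lemma addable_lowerSet {μ : YoungDiagram} {i : ℕ} (h : Addable μ i) :
    IsLowerSet (↑(insert (i, μ.rowLen i) μ.cells) : Set (ℕ × ℕ)) := by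
  intro a b hba ha
  simp only [Finset.coe_insert, Set.mem_insert_iff, Finset.mem_coe, YoungDiagram.mem_cells] at *
  obtain ⟨b1, b2⟩ := b
  obtain ⟨a1, a2⟩ := a
  obtain ⟨h1, h2⟩ : b1 ≤ a1 ∧ b2 ≤ a2 := hba
  rcases ha with ha | ha
  · obtain ⟨rfl, rfl⟩ : a1 = i ∧ a2 = μ.rowLen i := by
      simpa [Prod.ext_iff] using ha
    rcases eq_or_lt_of_le h2 with heq | hb2
    · rcases eq_or_lt_of_le h1 with heq1 | hb1
      · exact Or.inl (by rw [heq1, heq])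
      · right
        rcases h with h0 | h
        · omega
        · rw [YoungDiagram.mem_iff_lt_rowLen, heq]
          calc μ.rowLen a1 < μ.rowLen (a1 - 1) := h
            _ ≤ μ.rowLen b1 := μ.rowLen_anti _ _ (by omega)
    · right
      rw [YoungDiagram.mem_iff_lt_rowLen]
      exact lt_of_lt_of_le hb2 (μ.rowLen_anti _ _ h1)
  · exact Or.inr (μ.up_left_mem h1 h2 ha)

/-- The Young diagram obtained by adding a corner in row `i` (junk value `⊥` if not addable). -/
noncomputable def addCellF (μ : YoungDiagram) (i : ℕ) : YoungDiagram :=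
  if h : Addable μ i then ⟨insert (i, μ.rowLen i) μ.cells, addable_lowerSet h⟩ else ⊥

lemma addCellF_cells {μ : YoungDiagram} {i : ℕ} (h : Addable μ i) :
    (addCellF μ i).cells = insert (i, μ.rowLen i) μ.cells := by
  rw [addCellF, dif_pos h]

lemma corner_not_mem {μ : YoungDiagram} (i : ℕ) : (i, μ.rowLen i) ∉ μ.cells := by
  rw [YoungDiagram.mem_cells, YoungDiagram.mem_iff_lt_rowLen]; omega

lemma addCellF_covers {μ : YoungDiagram} {i : ℕ} (h : Addable μ i) :
    YDCovers μ (addCellF μ i) :=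
  ⟨(i, μ.rowLen i), corner_not_mem i, addCellF_cells h⟩

lemma covers_classify {μ Λ : YoungDiagram} (h : YDCovers μ Λ) :
    ∃ i ∈ Finset.filter (fun i => Addable μ i) (Finset.range (μ.colLen 0 + 1)),
      Λ = addCellF μ i := by
  obtain ⟨⟨i, j⟩, hc, hcells⟩ := h
  have hmemΛ : (i, j) ∈ Λ.cells := by rw [hcells]; exact Finset.mem_insert_self _ _
  have hge : μ.rowLen i ≤ j := by
    by_contra hlt
    exact hc (by rw [YoungDiagram.mem_cells, YoungDiagram.mem_iff_lt_rowLen]; omega)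
  have hj : j = μ.rowLen i := by
    rcases eq_or_lt_of_le hge with h' | h'
    · omega
    · exfalso
      have : (i, μ.rowLen i) ∈ Λ.cells := by
        rw [YoungDiagram.mem_cells]
        exact Λ.up_left_mem le_rfl (le_of_lt h') (by rwa [← YoungDiagram.mem_cells])
      rw [hcells, Finset.mem_insert] at this
      rcases this with h'' | h''
      · exact absurd (Prod.ext_iff.mp h'').2 (by omega)
      · exact corner_not_mem i h''
  subst hj
  have hadd : Addable μ i := by
    rcases Nat.eq_zero_or_pos i with rfl | hi
    · exact Or.inl rfl
    · right
      have hle : μ.rowLen i ≤ μ.rowLen (i - 1) := μ.rowLen_anti _ _ (by omega)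
      rcases eq_or_lt_of_le hle with h' | h'
      · exfalso
        have : (i - 1, μ.rowLen i) ∈ Λ.cells := by
          rw [YoungDiagram.mem_cells]
          exact Λ.up_left_mem (Nat.sub_le i 1) le_rfl (by rwa [← YoungDiagram.mem_cells])
        rw [hcells, Finset.mem_insert] at this
        rcases this with h'' | h''
        · exact absurd (Prod.ext_iff.mp h'').1 (by omega)
        · rw [YoungDiagram.mem_cells, YoungDiagram.mem_iff_lt_rowLen] at h''
          omega
      · exact h'
  refine ⟨i, Finset.mem_filter.mpr ⟨Finset.mem_range.mpr ?_, hadd⟩, ?_⟩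
  · rcases hadd with rfl | h'
    · omega
    · have : 0 < μ.rowLen (i - 1) := by omega
      rw [rowLen_pos_iff] at this
      omega
  · exact yd_ext (by rw [hcells, addCellF_cells hadd])

lemma removable_lowerSet {μ : YoungDiagram} {i : ℕ} (h : Removable μ i) :
    IsLowerSet (↑(μ.cells.erase (i, μ.rowLen i - 1)) : Set (ℕ × ℕ)) := by
  have hpos : 0 < μ.rowLen i := by omega
  intro a b hba ha
  simp only [Finset.coe_erase, Set.mem_diff, Finset.mem_coe, YoungDiagram.mem_cells,
    Set.mem_singleton_iff] at *
  obtain ⟨b1, b2⟩ := b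
  obtain ⟨a1, a2⟩ := a
  obtain ⟨h1, h2⟩ : b1 ≤ a1 ∧ b2 ≤ a2 := hba
  obtain ⟨haμ, hane⟩ := ha
  refine ⟨μ.up_left_mem h1 h2 haμ, ?_⟩
  intro hbe
  obtain ⟨rfl, rfl⟩ : b1 = i ∧ b2 = μ.rowLen i - 1 := by simpa [Prod.ext_iff] using hbe
  have hlt : a2 < μ.rowLen a1 := YoungDiagram.mem_iff_lt_rowLen.mp haμ
  have hle : μ.rowLen a1 ≤ μ.rowLen b1 := μ.rowLen_anti _ _ h1
  have ha1 : a1 = b1 := by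
    by_contra hne
    have : μ.rowLen a1 ≤ μ.rowLen (b1 + 1) := μ.rowLen_anti _ _ (by omega)
    omega
  apply hane
  simp [Prod.ext_iff, ha1]
  omega

noncomputable def removeCellF (μ : YoungDiagram) (i : ℕ) : YoungDiagram :=
  if h : Removable μ i then ⟨μ.cells.erase (i, μ.rowLen i - 1), removable_lowerSet h⟩ else ⊥

lemma removeCellF_cells {μ : YoungDiagram} {i : ℕ} (h : Removable μ i) :
    (removeCellF μ i).cells = μ.cells.erase (i, μ.rowLen i - 1) := by
  rw [removeCellF, dif_pos h]

lemma inner_corner_mem {μ : YoungDiagram} {i : ℕ} (h : Removable μ i) :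
    (i, μ.rowLen i - 1) ∈ μ.cells := by
  rw [YoungDiagram.mem_cells, YoungDiagram.mem_iff_lt_rowLen]; omega

lemma removeCellF_covers {μ : YoungDiagram} {i : ℕ} (h : Removable μ i) :
    YDCovers (removeCellF μ i) μ := by
  refine ⟨(i, μ.rowLen i - 1), ?_, ?_⟩
  · rw [removeCellF_cells h]; simp
  · rw [removeCellF_cells h, Finset.insert_erase (inner_corner_mem h)]

lemma covers_classify' {κ μ : YoungDiagram} (h : YDCovers κ μ) :
    ∃ i ∈ Finset.filter (fun i => Removable μ i) (Finset.range (μ.colLen 0)),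
      κ = removeCellF μ i := by
  obtain ⟨⟨i, j⟩, hc, hcells⟩ := h
  have hκ : κ.cells = μ.cells.erase (i, j) := by
    rw [hcells, Finset.erase_insert hc]
  have hmem : (i, j) ∈ μ.cells := by rw [hcells]; exact Finset.mem_insert_self _ _
  have hjlt : j < μ.rowLen i := YoungDiagram.mem_iff_lt_rowLen.mp hmem
  have hj : j + 1 = μ.rowLen i := by
    rcases eq_or_lt_of_le (Nat.succ_le_of_lt hjlt) with h' | h'
    · exact h'
    · exfalso
      have h1 : (i, j + 1) ∈ κ.cells := by
        rw [hκ, Finset.mem_erase]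
        exact ⟨by simp [Prod.ext_iff], by rw [YoungDiagram.mem_cells,
          YoungDiagram.mem_iff_lt_rowLen]; omega⟩
      have h2 : (i, j) ∈ κ.cells := by
        rw [YoungDiagram.mem_cells] at h1 ⊢
        exact κ.up_left_mem le_rfl (by omega) h1
      rw [hκ, Finset.mem_erase] at h2
      exact h2.1 rfl
  have hrem : Removable μ i := by
    unfold Removable
    rcases Nat.lt_or_ge (μ.rowLen (i + 1)) (μ.rowLen i) with h' | h'
    · exact h'
    · exfalso
      have h1 : (i + 1, j) ∈ κ.cells := by
        rw [hκ, Finset.mem_erase]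
        exact ⟨by simp [Prod.ext_iff], by rw [YoungDiagram.mem_cells,
          YoungDiagram.mem_iff_lt_rowLen]; omega⟩
      have h2 : (i, j) ∈ κ.cells := by
        rw [YoungDiagram.mem_cells] at h1 ⊢
        exact κ.up_left_mem (by omega) le_rfl h1
      rw [hκ, Finset.mem_erase] at h2
      exact h2.1 rfl
  refine ⟨i, Finset.mem_filter.mpr ⟨Finset.mem_range.mpr ?_, hrem⟩, ?_⟩
  · rw [← rowLen_pos_iff]; omega
  · refine yd_ext ?_
    rw [hκ, removeCellF_cells hrem]
    congr 1
    simp [Prod.ext_iff]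
    omega

noncomputable instance : DecidableEq YoungDiagram := Classical.decEq _

/-- the finset of diagrams covering μ -/
noncomputable def upFinset (μ : YoungDiagram) : Finset YoungDiagram :=
  (Finset.filter (fun i => Addable μ i) (Finset.range (μ.colLen 0 + 1))).image (addCellF μ)

/-- the finset of diagrams covered by μ -/
noncomputable def downFinset (μ : YoungDiagram) : Finset YoungDiagram :=
  (Finset.filter (fun i => Removable μ i) (Finset.range (μ.colLen 0))).image (removeCellF μ)

lemma mem_upFinset {μ Λ : YoungDiagram} : Λ ∈ upFinset μ ↔ YDCovers μ Λ := by
  unfold upFinset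
  constructor
  · intro h
    obtain ⟨i, hi, rfl⟩ := Finset.mem_image.mp h
    exact addCellF_covers (Finset.mem_filter.mp hi).2
  · intro h
    obtain ⟨i, hi, rfl⟩ := covers_classify h
    exact Finset.mem_image_of_mem _ hi

lemma mem_downFinset {μ κ : YoungDiagram} : κ ∈ downFinset μ ↔ YDCovers κ μ := by
  unfold downFinset
  constructor
  · intro h
    obtain ⟨i, hi, rfl⟩ := Finset.mem_image.mp h
    exact removeCellF_covers (Finset.mem_filter.mp hi).2
  · intro h
    obtain ⟨i, hi, rfl⟩ := covers_classify' h
    exact Finset.mem_image_of_mem _ hi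

lemma addCellF_injOn {μ : YoungDiagram} :
    Set.InjOn (addCellF μ)
      ↑(Finset.filter (fun i => Addable μ i) (Finset.range (μ.colLen 0 + 1))) := by
  intro i hi i' hi' heq
  simp only [Finset.coe_filter, Set.mem_setOf_eq] at hi hi'
  have h1 := addCellF_cells hi.2
  have h2 := addCellF_cells hi'.2
  have : (i, μ.rowLen i) ∈ (addCellF μ i').cells := by
    rw [← heq, h1]; exact Finset.mem_insert_self _ _
  rw [h2, Finset.mem_insert] at this
  rcases this with h' | h'
  · exact (Prod.ext_iff.mp h').1
  · exact absurd h' (corner_not_mem i)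

lemma removeCellF_injOn {μ : YoungDiagram} :
    Set.InjOn (removeCellF μ)
      ↑(Finset.filter (fun i => Removable μ i) (Finset.range (μ.colLen 0))) := by
  intro i hi i' hi' heq
  simp only [Finset.coe_filter, Set.mem_setOf_eq] at hi hi'
  have h1 := removeCellF_cells hi.2
  have h2 := removeCellF_cells hi'.2
  by_contra hne
  have hm : (i, μ.rowLen i - 1) ∈ (removeCellF μ i').cells := by
    rw [h2, Finset.mem_erase]
    exact ⟨by simp [Prod.ext_iff]; omega, inner_corner_mem hi.2⟩
  rw [← heq, h1, Finset.mem_erase] at hm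
  exact hm.1 rfl

lemma sum_upFinset {M : Type*} [AddCommMonoid M] {μ : YoungDiagram} (f : YoungDiagram → M) :
    ∑ Λ ∈ upFinset μ, f Λ
      = ∑ i ∈ Finset.filter (fun i => Addable μ i) (Finset.range (μ.colLen 0 + 1)),
          f (addCellF μ i) := by
  unfold upFinset
  exact Finset.sum_image fun _ hi _ hi' h => addCellF_injOn hi hi' h

lemma sum_downFinset {M : Type*} [AddCommMonoid M] {μ : YoungDiagram} (f : YoungDiagram → M) :
    ∑ κ ∈ downFinset μ, f κ
      = ∑ i ∈ Finset.filter (fun i => Removable μ i) (Finset.range (μ.colLen 0)),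
          f (removeCellF μ i) := by
  unfold downFinset
  exact Finset.sum_image fun _ hi _ hi' h => removeCellF_injOn hi hi' h

/-! ### chains and dimension -/

def chainSet (μ : YoungDiagram) : Set (List YoungDiagram) :=
  {L | List.Chain' YDCovers L ∧ L.head? = some ⊥ ∧ L.getLast? = some μ}

lemma dimYD_eq_ncard (μ : YoungDiagram) : dimYD μ = (chainSet μ).ncard :=
  Nat.card_coe_set_eq (chainSet μ)

lemma chainSet_bot : chainSet ⊥ = {[(⊥ : YoungDiagram)]} := by
  ext L
  simp only [chainSet, Set.mem_setOf_eq, Set.mem_singleton_iff]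
  constructor
  · rintro ⟨hc, hh, hl⟩
    have hne : L ≠ [] := by rintro rfl; simp at hh
    have hL : L.dropLast ++ [L.getLast hne] = L := List.dropLast_append_getLast hne
    have hlast : L.getLast hne = ⊥ := by
      have := List.getLast?_eq_getLast_of_ne_nil hne
      rw [this] at hl; exact Option.some_injective _ hl
    rcases eq_or_ne L.dropLast [] with hd | hd
    · rw [← hL, hd, hlast]; rfl
    · exfalso
      rw [← hL] at hc
      unfold List.Chain' at hc
      rw [List.isChain_append] at hc
      have := hc.2.2 (L.dropLast.getLast hd) (by simp [List.getLast?_eq_getLast_of_ne_nil hd]) ⊥ (by simp [hlast])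
      exact not_covers_bot this
  · rintro rfl
    refine ⟨List.isChain_singleton _, rfl, rfl⟩

lemma mem_chainSet_iff {μ : YoungDiagram} (hμ : μ ≠ ⊥) {L : List YoungDiagram} :
    L ∈ chainSet μ ↔ ∃ κ, YDCovers κ μ ∧ ∃ L' ∈ chainSet κ, L = L' ++ [μ] := by
  constructor
  · rintro ⟨hc, hh, hl⟩
    have hne : L ≠ [] := by rintro rfl; simp at hh
    have hL : L.dropLast ++ [L.getLast hne] = L := List.dropLast_append_getLast hne
    have hlast : L.getLast hne = μ := by
      have := List.getLast?_eq_getLast_of_ne_nil hne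
      rw [this] at hl; exact Option.some_injective _ hl
    have hd : L.dropLast ≠ [] := by
      intro hd
      rw [← hL, hd, hlast] at hh
      simp at hh
      exact hμ hh
    have hc' := hc
    rw [← hL] at hc'
    unfold List.Chain' at hc'
    rw [List.isChain_append] at hc'
    refine ⟨L.dropLast.getLast hd, ?_, L.dropLast, ⟨hc'.1, ?_, ?_⟩, ?_⟩
    · have := hc'.2.2 (L.dropLast.getLast hd) (by simp [List.getLast?_eq_getLast_of_ne_nil hd]) μ (by simp [hlast])
      exact this
    · rw [← hL, List.head?_append_of_ne_nil _ hd] at hh; exact hh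
    · rw [List.getLast?_eq_getLast_of_ne_nil hd]
    · conv_lhs => rw [← hL]
      rw [hlast]
  · rintro ⟨κ, hκ, L', ⟨hc, hh, hl⟩, rfl⟩
    have hne : L' ≠ [] := by rintro rfl; simp at hh
    refine ⟨?_, ?_, ?_⟩
    · unfold List.Chain'
      rw [List.isChain_append]
      refine ⟨hc, List.isChain_singleton _, ?_⟩
      intro x hx y hy
      simp only [List.head?_cons, Option.mem_def, Option.some.injEq] at hy
      rw [hl] at hx
      simp only [Option.mem_def, Option.some.injEq] at hx
      subst hy
      rw [← hx]
      exact hκ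
    · rw [List.head?_append_of_ne_nil _ hne]; exact hh
    · simp

lemma covers_card_lt {κ μ : YoungDiagram} (h : YDCovers κ μ) : κ.card < μ.card := by
  rw [covers_card h]; omega

lemma chainSet_finite (μ : YoungDiagram) : (chainSet μ).Finite := by
  generalize hn : μ.card = n
  induction n using Nat.strong_induction_on generalizing μ with
  | _ n IH =>
    rcases eq_or_ne μ ⊥ with rfl | hμ
    · rw [chainSet_bot]; exact Set.finite_singleton _
    · have hsub : chainSet μ ⊆
          ⋃ κ ∈ (downFinset μ : Set YoungDiagram), (fun L => L ++ [μ]) '' chainSet κ := by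
        intro L hL
        rw [mem_chainSet_iff hμ] at hL
        obtain ⟨κ, hκ, L', hL', rfl⟩ := hL
        exact Set.mem_biUnion (Finset.mem_coe.mpr (mem_downFinset.mpr hκ)) ⟨L', hL', rfl⟩
      refine Set.Finite.subset ?_ hsub
      refine Set.Finite.biUnion (downFinset μ).finite_toSet ?_
      intro κ hκ
      refine Set.Finite.image _ (IH κ.card ?_ κ rfl)
      rw [← hn]
      exact covers_card_lt (mem_downFinset.mp (Finset.mem_coe.mp hκ))

lemma dim_rec {μ : YoungDiagram} (hμ : μ ≠ ⊥) :
    dimYD μ = ∑ κ ∈ downFinset μ, dimYD κ := by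
  have hT : chainSet μ = ↑((downFinset μ).biUnion
      (fun κ => Finset.image (· ++ [μ]) (chainSet_finite κ).toFinset)) := by
    ext L
    rw [mem_chainSet_iff hμ]
    simp only [Finset.coe_biUnion, Set.mem_iUnion, Finset.mem_coe, Finset.mem_image,
      Set.Finite.mem_toFinset, mem_downFinset, exists_prop]
    constructor
    · rintro ⟨κ, hκ, L', hL', rfl⟩
      exact ⟨κ, hκ, L', hL', rfl⟩
    · rintro ⟨κ, hκ, L', hL', rfl⟩
      exact ⟨κ, hκ, L', hL', rfl⟩
  rw [dimYD_eq_ncard, hT, Set.ncard_coe_finset]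
  rw [Finset.card_biUnion]
  · refine Finset.sum_congr rfl fun κ _ => ?_
    rw [Finset.card_image_of_injective _ (List.append_left_injective _), dimYD_eq_ncard,
      Set.ncard_eq_toFinset_card _ (chainSet_finite κ)]
  · intro κ₁ h₁ κ₂ h₂ hne
    rw [Function.onFun, Finset.disjoint_left]
    intro x hx₁ hx₂
    obtain ⟨L₁, hL₁, rfl⟩ := Finset.mem_image.mp hx₁
    obtain ⟨L₂, hL₂, heq⟩ := Finset.mem_image.mp hx₂
    have : L₂ = L₁ := List.append_left_injective _ heq
    subst this
    rw [Set.Finite.mem_toFinset] at hL₁ hL₂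
    apply hne
    have e1 := hL₁.2.2
    have e2 := hL₂.2.2
    rw [e1] at e2
    exact Option.some_injective _ e2

lemma colLen_pos {μ : YoungDiagram} (hμ : μ ≠ ⊥) : 0 < μ.colLen 0 := by
  by_contra h
  push_neg at h
  apply hμ
  apply yd_ext
  rw [YoungDiagram.cells_bot, Finset.eq_empty_iff_forall_notMem]
  rintro ⟨i, j⟩ hm
  rw [YoungDiagram.mem_cells, YoungDiagram.mem_iff_lt_colLen] at hm
  have := μ.colLen_anti 0 j (Nat.zero_le j)
  omega

lemma downFinset_nonempty {μ : YoungDiagram} (hμ : μ ≠ ⊥) : ∃ κ, κ ∈ downFinset μ := by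
  set M := μ.colLen 0 with hM
  have hMpos : 0 < M := colLen_pos hμ
  have hrem : Removable μ (M - 1) := by
    unfold Removable
    have h1 : 0 < μ.rowLen (M - 1) := rowLen_pos_iff.mpr (by omega)
    have h2 : ¬ (0 < μ.rowLen M) := by rw [rowLen_pos_iff]; omega
    have h3 : M - 1 + 1 = M := by omega
    rw [h3]
    omega
  exact ⟨_, mem_downFinset.mpr (removeCellF_covers hrem)⟩

lemma dim_pos (μ : YoungDiagram) : 0 < dimYD μ := by
  generalize hn : μ.card = n
  induction n using Nat.strong_induction_on generalizing μ with
  | _ n IH =>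
    rcases eq_or_ne μ ⊥ with rfl | hμ
    · rw [dimYD_eq_ncard, chainSet_bot]; simp
    · rw [dim_rec hμ]
      obtain ⟨κ, hκ⟩ := downFinset_nonempty hμ
      refine Finset.sum_pos' (fun _ _ => Nat.zero_le _) ⟨κ, hκ, ?_⟩
      exact IH κ.card (hn ▸ covers_card_lt (mem_downFinset.mp hκ)) κ rfl

lemma sdiff_insert {s : Finset (ℕ × ℕ)} {c : ℕ × ℕ} (hc : c ∉ s) :
    insert c s \ s = {c} := by
  ext x
  simp only [Finset.mem_sdiff, Finset.mem_insert, Finset.mem_singleton]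
  constructor
  · rintro ⟨h1 | h1, h2⟩
    · exact h1
    · exact absurd h1 h2
  · rintro rfl
    exact ⟨Or.inl rfl, hc⟩

lemma covers_sup {κ lam μ' : YoungDiagram} (h1 : YDCovers κ lam) (h2 : YDCovers κ μ')
    (hne : μ' ≠ lam) :
    YDCovers lam (lam ⊔ μ') ∧ YDCovers μ' (lam ⊔ μ') ∧ lam ⊓ μ' = κ ∧
      (lam ⊔ μ').cells \ lam.cells = μ'.cells \ κ.cells := by
  obtain ⟨b1, hb1, e1⟩ := h1
  obtain ⟨b2, hb2, e2⟩ := h2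
  have hbne : b1 ≠ b2 := by
    rintro rfl
    exact hne (yd_ext (by rw [e1, e2]))
  have hb2lam : b2 ∉ lam.cells := by
    rw [e1, Finset.mem_insert]
    rintro (h | h)
    · exact hbne h.symm
    · exact hb2 h
  have hb1μ : b1 ∉ μ'.cells := by
    rw [e2, Finset.mem_insert]
    rintro (h | h)
    · exact hbne h
    · exact hb1 h
  have hsup : (lam ⊔ μ').cells = insert b2 lam.cells := by
    rw [YoungDiagram.cells_sup]
    ext x
    simp only [Finset.mem_union, Finset.mem_insert, e1, e2]
    tauto
  have hsup' : (lam ⊔ μ').cells = insert b1 μ'.cells := by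
    rw [YoungDiagram.cells_sup]
    ext x
    simp only [Finset.mem_union, Finset.mem_insert, e1, e2]
    tauto
  have hinf : lam ⊓ μ' = κ := by
    apply yd_ext
    rw [YoungDiagram.cells_inf]
    ext x
    simp only [Finset.mem_inter, Finset.mem_insert, e1, e2]
    constructor
    · rintro ⟨h | h, h' | h'⟩
      · exact absurd (h.symm.trans h') hbne
      · exact h'
      · exact h
      · exact h
    · intro h
      exact ⟨Or.inr h, Or.inr h⟩
  refine ⟨⟨b2, hb2lam, hsup⟩, ⟨b1, hb1μ, hsup'⟩, hinf, ?_⟩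
  rw [hsup, sdiff_insert hb2lam, e2, sdiff_insert hb2]

lemma covers_inf {lam Λ κ : YoungDiagram} (h1 : YDCovers lam Λ) (h2 : YDCovers κ Λ)
    (hne : κ ≠ lam) :
    YDCovers (lam ⊓ κ) lam ∧ YDCovers (lam ⊓ κ) κ ∧ lam ⊔ κ = Λ ∧
      Λ.cells \ lam.cells = κ.cells \ (lam ⊓ κ).cells := by
  obtain ⟨b1, hb1, e1⟩ := h1
  obtain ⟨b2, hb2, e2⟩ := h2
  have hbne : b1 ≠ b2 := by
    rintro rfl
    apply hne
    apply yd_ext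
    have : lam.cells = Λ.cells.erase b1 := by rw [e1, Finset.erase_insert hb1]
    have h2' : κ.cells = Λ.cells.erase b1 := by rw [e2, Finset.erase_insert hb2]
    rw [h2', ← this]
  have hb2lam : b2 ∈ lam.cells := by
    have : b2 ∈ Λ.cells := by rw [e2]; exact Finset.mem_insert_self _ _
    rw [e1, Finset.mem_insert] at this
    rcases this with h | h
    · exact absurd h.symm hbne
    · exact h
  have hb1κ : b1 ∈ κ.cells := by
    have : b1 ∈ Λ.cells := by rw [e1]; exact Finset.mem_insert_self _ _
    rw [e2, Finset.mem_insert] at this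
    rcases this with h | h
    · exact absurd h hbne
    · exact h
  have hlam : lam.cells = insert b2 (lam.cells ∩ κ.cells) := by
    ext x
    simp only [Finset.mem_insert, Finset.mem_inter]
    constructor
    · intro hx
      have : x ∈ Λ.cells := by rw [e1]; exact Finset.mem_insert_of_mem hx
      rw [e2, Finset.mem_insert] at this
      rcases this with h | h
      · exact Or.inl h
      · exact Or.inr ⟨hx, h⟩
    · rintro (rfl | ⟨h, _⟩)
      · exact hb2lam
      · exact h
  have hκ : κ.cells = insert b1 (lam.cells ∩ κ.cells) := by
    ext x
    simp only [Finset.mem_insert, Finset.mem_inter]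
    constructor
    · intro hx
      have : x ∈ Λ.cells := by rw [e2]; exact Finset.mem_insert_of_mem hx
      rw [e1, Finset.mem_insert] at this
      rcases this with h | h
      · exact Or.inl h
      · exact Or.inr ⟨h, hx⟩
    · rintro (rfl | ⟨_, h⟩)
      · exact hb1κ
      · exact h
  have hb2inf : b2 ∉ lam.cells ∩ κ.cells := by
    rw [Finset.mem_inter]
    rintro ⟨_, h⟩
    exact hb2 h
  have hb1inf : b1 ∉ lam.cells ∩ κ.cells := by
    rw [Finset.mem_inter]
    rintro ⟨h, _⟩
    exact hb1 h
  have hsup : lam ⊔ κ = Λ := by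
    apply yd_ext
    rw [YoungDiagram.cells_sup]
    ext x
    simp only [Finset.mem_union]
    constructor
    · rintro (h | h)
      · rw [e1]; exact Finset.mem_insert_of_mem h
      · rw [e2]; exact Finset.mem_insert_of_mem h
    · intro hx
      rw [e1, Finset.mem_insert] at hx
      rcases hx with rfl | hx
      · exact Or.inr hb1κ
      · exact Or.inl hx
  refine ⟨⟨b2, hb2inf, by rw [YoungDiagram.cells_inf]; exact hlam⟩,
    ⟨b1, hb1inf, by rw [YoungDiagram.cells_inf]; exact hκ⟩, hsup, ?_⟩
  rw [e1, sdiff_insert hb1, YoungDiagram.cells_inf]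
  ext x
  simp only [Finset.mem_singleton, Finset.mem_sdiff, Finset.mem_inter, not_and]
  constructor
  · rintro rfl
    exact ⟨hb1κ, fun h => absurd h hb1⟩
  · rintro ⟨hxκ, hx⟩
    have hxΛ : x ∈ Λ.cells := by rw [e2]; exact Finset.mem_insert_of_mem hxκ
    rw [e1, Finset.mem_insert] at hxΛ
    rcases hxΛ with h | h
    · exact h
    · exact absurd hxκ (hx h)

lemma card_eq_sum_rowLens (μ : YoungDiagram) :
    μ.card = ∑ i ∈ Finset.range (μ.colLen 0), μ.rowLen i := by
  have hcells : μ.cells = (Finset.range (μ.colLen 0)).biUnion μ.row := by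
    ext ⟨i, j⟩
    simp only [Finset.mem_biUnion, Finset.mem_range, YoungDiagram.mem_row_iff]
    constructor
    · intro h
      refine ⟨i, ?_, ?_, rfl⟩
      · have h1 : i < μ.colLen j := by
          rw [← YoungDiagram.mem_iff_lt_colLen, ← YoungDiagram.mem_cells]; exact h
        have h2 := μ.colLen_anti 0 j (Nat.zero_le j)
        omega
      · rwa [YoungDiagram.mem_cells] at h
    · rintro ⟨i', _, h, rfl⟩
      rwa [YoungDiagram.mem_cells]
  rw [YoungDiagram.card, hcells, Finset.card_biUnion]
  · exact Finset.sum_congr rfl fun i _ => (μ.rowLen_eq_card).symm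
  · intro i _ i' _ hne
    rw [Function.onFun, Finset.disjoint_left]
    intro x hx hx'
    rw [YoungDiagram.mem_row_iff] at hx hx'
    exact hne (hx.2 ▸ hx'.2)

section Telescope
open Finset

lemma key_telescope (u v : ℂ) (M : ℕ) (r : ℕ → ℕ) (hanti : ∀ i, r (i + 1) ≤ r i)
    (hM : r M = 0) :
    (∑ i ∈ Finset.filter (fun i => i = 0 ∨ r i < r (i - 1)) (Finset.range (M + 1)),
        ((r i : ℂ) - (i : ℂ) + u) * ((r i : ℂ) - (i : ℂ) + v))
      - (∑ i ∈ Finset.filter (fun i => r (i + 1) < r i) (Finset.range M),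
          ((r i : ℂ) - 1 - (i : ℂ) + u) * ((r i : ℂ) - 1 - (i : ℂ) + v))
      = u * v + 2 * ∑ i ∈ Finset.range M, (r i : ℂ) := by
  classical
  set H : ℕ → ℂ := fun i => (r i : ℂ)^2 + (u + v - 2) * (r i : ℂ) - 2 * (i : ℂ) * (r i : ℂ)
    with hH
  rw [Finset.sum_filter, Finset.sum_filter, Finset.sum_range_succ']
  have hstep : ∀ i ∈ Finset.range M,
      ((if i + 1 = 0 ∨ r (i + 1) < r (i + 1 - 1) then
          ((r (i + 1) : ℂ) - ((i + 1 : ℕ) : ℂ) + u) * ((r (i + 1) : ℂ) - ((i + 1 : ℕ) : ℂ) + v)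
        else 0)
        - (if r (i + 1) < r i then
            ((r i : ℂ) - 1 - (i : ℂ) + u) * ((r i : ℂ) - 1 - (i : ℂ) + v) else 0))
      = (H (i + 1) - H i) + 2 * (r (i + 1) : ℂ) := by
    intro i _
    simp only [Nat.add_sub_cancel, Nat.succ_ne_zero, false_or]
    by_cases h : r (i + 1) < r i
    · rw [if_pos h, if_pos h, hH]
      push_cast
      ring
    · rw [if_neg h, if_neg h]
      have heq : r (i + 1) = r i := le_antisymm (hanti i) (not_lt.mp h)
      have heqc : ((r (i + 1) : ℕ) : ℂ) = ((r i : ℕ) : ℂ) := by rw [heq]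
      simp only [hH]
      rw [heqc]
      push_cast
      ring
  have hD : (∑ i ∈ Finset.range M,
        (if i + 1 = 0 ∨ r (i + 1) < r (i + 1 - 1) then
          ((r (i + 1) : ℂ) - ((i + 1 : ℕ) : ℂ) + u) * ((r (i + 1) : ℂ) - ((i + 1 : ℕ) : ℂ) + v)
        else 0))
      - (∑ i ∈ Finset.range M,
          (if r (i + 1) < r i then
            ((r i : ℂ) - 1 - (i : ℂ) + u) * ((r i : ℂ) - 1 - (i : ℂ) + v) else 0))
      = (H M - H 0) + 2 * ∑ i ∈ Finset.range M, (r (i + 1) : ℂ) := by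
    rw [← Finset.sum_sub_distrib, Finset.sum_congr rfl hstep, Finset.sum_add_distrib,
      Finset.sum_range_sub, ← Finset.mul_sum]
  have hsum' : ∑ i ∈ Finset.range M, (r (i + 1) : ℂ)
      = (∑ i ∈ Finset.range M, (r i : ℂ)) - (r 0 : ℂ) := by
    have h1 := Finset.sum_range_succ' (fun i => (r i : ℂ)) M
    have h2 := Finset.sum_range_succ (fun i => (r i : ℂ)) M
    rw [h2, hM] at h1
    push_cast at h1
    linear_combination -h1
  have hHM : H M = 0 := by rw [hH]; simp [hM]
  rw [hsum', hHM] at hD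
  have h0true : ((0:ℕ) = 0 ∨ r 0 < r (0 - 1)) := Or.inl rfl
  rw [if_pos h0true]
  have hH0 : H 0 = (r 0 : ℂ)^2 + (u + v - 2) * (r 0 : ℂ) := by rw [hH]; push_cast; ring
  rw [hH0] at hD
  simp only [Nat.cast_zero]
  linear_combination hD

end Telescope

noncomputable def phiSum (u v : ℂ) (κ Λ : YoungDiagram) : ℂ :=
  ∑ b ∈ Λ.cells \ κ.cells, (((b.2 : ℂ) - (b.1 : ℂ)) + u) * (((b.2 : ℂ) - (b.1 : ℂ)) + v)

lemma phiSum_add {u v : ℂ} {μ : YoungDiagram} {i : ℕ} (h : Addable μ i) :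
    phiSum u v μ (addCellF μ i)
      = ((μ.rowLen i : ℂ) - (i : ℂ) + u) * ((μ.rowLen i : ℂ) - (i : ℂ) + v) := by
  unfold phiSum
  rw [addCellF_cells h, sdiff_insert (corner_not_mem i), Finset.sum_singleton]

lemma phiSum_rem {u v : ℂ} {μ : YoungDiagram} {i : ℕ} (h : Removable μ i) :
    phiSum u v (removeCellF μ i) μ
      = ((μ.rowLen i : ℂ) - 1 - (i : ℂ) + u) * ((μ.rowLen i : ℂ) - 1 - (i : ℂ) + v) := by
  unfold phiSum
  have hd : μ.cells \ (removeCellF μ i).cells = {(i, μ.rowLen i - 1)} := by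
    rw [removeCellF_cells h]
    ext x
    simp only [Finset.mem_sdiff, Finset.mem_erase, Finset.mem_singleton, not_and]
    constructor
    · rintro ⟨hx, hx2⟩
      by_contra hne
      exact (hx2 hne) hx
    · rintro rfl
      exact ⟨inner_corner_mem h, fun hne _ => hne rfl⟩
  rw [hd, Finset.sum_singleton]
  have hc : ((μ.rowLen i - 1 : ℕ) : ℂ) = (μ.rowLen i : ℂ) - 1 := by
    have h1 : 1 ≤ μ.rowLen i := by unfold Removable at h; omega
    push_cast [h1]
    ring
  show (((μ.rowLen i - 1 : ℕ) : ℂ) - (i : ℂ) + u) * (((μ.rowLen i - 1 : ℕ) : ℂ) - (i : ℂ) + v) = _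
  rw [hc]

lemma AR (u v : ℂ) (μ : YoungDiagram) :
    (∑ Λ ∈ upFinset μ, phiSum u v μ Λ) - (∑ κ ∈ downFinset μ, phiSum u v κ μ)
      = u * v + 2 * (μ.card : ℂ) := by
  rw [sum_upFinset, sum_downFinset]
  have hA : ∑ i ∈ Finset.filter (fun i => Addable μ i) (Finset.range (μ.colLen 0 + 1)),
        phiSum u v μ (addCellF μ i)
      = ∑ i ∈ Finset.filter (fun i => Addable μ i) (Finset.range (μ.colLen 0 + 1)),
          ((μ.rowLen i : ℂ) - (i : ℂ) + u) * ((μ.rowLen i : ℂ) - (i : ℂ) + v) :=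
    Finset.sum_congr rfl fun i hi => phiSum_add (Finset.mem_filter.mp hi).2
  have hR : ∑ i ∈ Finset.filter (fun i => Removable μ i) (Finset.range (μ.colLen 0)),
        phiSum u v (removeCellF μ i) μ
      = ∑ i ∈ Finset.filter (fun i => Removable μ i) (Finset.range (μ.colLen 0)),
          ((μ.rowLen i : ℂ) - 1 - (i : ℂ) + u) * ((μ.rowLen i : ℂ) - 1 - (i : ℂ) + v) :=
    Finset.sum_congr rfl fun i hi => phiSum_rem (Finset.mem_filter.mp hi).2
  rw [hA, hR]
  have hM0 : μ.rowLen (μ.colLen 0) = 0 := by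
    have := (rowLen_pos_iff (μ := μ) (i := μ.colLen 0))
    omega
  have hkey := key_telescope u v (μ.colLen 0) μ.rowLen
    (fun i => μ.rowLen_anti i (i + 1) (Nat.le_succ i)) hM0
  rw [card_eq_sum_rowLens μ]
  push_cast
  convert hkey using 2

lemma main_identity (u v : ℂ) : ∀ n : ℕ, ∀ lam : YoungDiagram, lam.card = n →
    ∑ Λ ∈ upFinset lam, phiSum u v lam Λ * (dimYD Λ : ℂ)
      = ((n : ℂ) + u * v) * ((n : ℂ) + 1) * (dimYD lam : ℂ) := by
  intro n
  induction n using Nat.strong_induction_on with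
  | _ n IH =>
    intro lam hlam
    have h1 : ∑ Λ ∈ upFinset lam, phiSum u v lam Λ * (dimYD Λ : ℂ)
        = ∑ Λ ∈ upFinset lam,
            (phiSum u v lam Λ * (dimYD lam : ℂ)
              + ∑ κ ∈ (downFinset Λ).erase lam, phiSum u v lam Λ * (dimYD κ : ℂ)) := by
      refine Finset.sum_congr rfl fun Λ hΛ => ?_
      have hcov := mem_upFinset.mp hΛ
      rw [dim_rec (covers_ne_bot hcov), Nat.cast_sum, Finset.mul_sum]
      rw [← Finset.add_sum_erase _ _ (mem_downFinset.mpr hcov)]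
    rw [h1, Finset.sum_add_distrib]
    have h3 : ∑ Λ ∈ upFinset lam, ∑ κ ∈ (downFinset Λ).erase lam,
          phiSum u v lam Λ * (dimYD κ : ℂ)
        = ∑ κ ∈ downFinset lam, ∑ μ' ∈ (upFinset κ).erase lam,
            phiSum u v κ μ' * (dimYD μ' : ℂ) := by
      rw [Finset.sum_sigma', Finset.sum_sigma']
      refine Finset.sum_nbij' (fun x => ⟨lam ⊓ x.2, x.2⟩) (fun y => ⟨lam ⊔ y.2, y.2⟩)
        ?_ ?_ ?_ ?_ ?_
      · rintro ⟨Λ, κ⟩ hx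
        rw [Finset.mem_sigma] at hx
        obtain ⟨hΛ, hκ⟩ := hx
        rw [Finset.mem_erase] at hκ
        obtain ⟨hκne, hκΛ⟩ := hκ
        obtain ⟨hc1, hc2, _, _⟩ :=
          covers_inf (mem_upFinset.mp hΛ) (mem_downFinset.mp hκΛ) hκne
        rw [Finset.mem_sigma]
        exact ⟨mem_downFinset.mpr hc1, Finset.mem_erase.mpr ⟨hκne, mem_upFinset.mpr hc2⟩⟩
      · rintro ⟨κ, μ'⟩ hy
        rw [Finset.mem_sigma] at hy
        obtain ⟨hκ, hμ'⟩ := hy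
        rw [Finset.mem_erase] at hμ'
        obtain ⟨hμne, hμκ⟩ := hμ'
        obtain ⟨hc1, hc2, _, _⟩ :=
          covers_sup (mem_downFinset.mp hκ) (mem_upFinset.mp hμκ) hμne
        rw [Finset.mem_sigma]
        exact ⟨mem_upFinset.mpr hc1, Finset.mem_erase.mpr ⟨hμne, mem_downFinset.mpr hc2⟩⟩
      · rintro ⟨Λ, κ⟩ hx
        rw [Finset.mem_sigma] at hx
        obtain ⟨hΛ, hκ⟩ := hx
        rw [Finset.mem_erase] at hκ
        obtain ⟨hκne, hκΛ⟩ := hκ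
        obtain ⟨_, _, hsup, _⟩ :=
          covers_inf (mem_upFinset.mp hΛ) (mem_downFinset.mp hκΛ) hκne
        exact Sigma.ext hsup HEq.rfl
      · rintro ⟨κ, μ'⟩ hy
        rw [Finset.mem_sigma] at hy
        obtain ⟨hκ, hμ'⟩ := hy
        rw [Finset.mem_erase] at hμ'
        obtain ⟨hμne, hμκ⟩ := hμ'
        obtain ⟨_, _, hinf, _⟩ :=
          covers_sup (mem_downFinset.mp hκ) (mem_upFinset.mp hμκ) hμne
        exact Sigma.ext hinf HEq.rfl
      · rintro ⟨Λ, κ⟩ hx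
        rw [Finset.mem_sigma] at hx
        obtain ⟨hΛ, hκ⟩ := hx
        rw [Finset.mem_erase] at hκ
        obtain ⟨hκne, hκΛ⟩ := hκ
        obtain ⟨_, _, _, hcells⟩ :=
          covers_inf (mem_upFinset.mp hΛ) (mem_downFinset.mp hκΛ) hκne
        have : phiSum u v lam Λ = phiSum u v (lam ⊓ κ) κ := by
          unfold phiSum
          rw [hcells]
        rw [this]
    rw [h3]
    have h4 : ∑ κ ∈ downFinset lam, ∑ μ' ∈ (upFinset κ).erase lam,
          phiSum u v κ μ' * (dimYD μ' : ℂ)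
        = ∑ κ ∈ downFinset lam,
            ((((n : ℂ) - 1) + u * v) * (n : ℂ) * (dimYD κ : ℂ)
              - phiSum u v κ lam * (dimYD lam : ℂ)) := by
      refine Finset.sum_congr rfl fun κ hκ => ?_
      have hcov := mem_downFinset.mp hκ
      have hcard : κ.card + 1 = n := by rw [← hlam, covers_card hcov]
      rw [Finset.sum_erase_eq_sub (mem_upFinset.mpr hcov)]
      rw [IH κ.card (by omega) κ rfl]
      have hcc : (κ.card : ℂ) = (n : ℂ) - 1 := by
        have h' : ((κ.card + 1 : ℕ) : ℂ) = (n : ℂ) := by rw [hcard]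
        push_cast at h'
        linear_combination h'
      rw [hcc]
      ring
    rw [h4]
    rw [Finset.sum_sub_distrib, ← Finset.sum_mul, ← Finset.sum_mul, ← Finset.mul_sum]
    have hAR := AR u v lam
    rw [hlam] at hAR
    rcases Nat.eq_zero_or_pos n with hn0 | hnpos
    · have hbot : lam = ⊥ := by
        apply yd_ext
        rw [YoungDiagram.cells_bot, ← Finset.card_eq_zero]
        rw [show lam.cells.card = lam.card from rfl, hlam, hn0]
      have hdown : downFinset lam = ∅ :=
        Finset.eq_empty_of_forall_notMem fun κ hκ =>
          not_covers_bot (hbot ▸ mem_downFinset.mp hκ)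
      rw [hdown] at hAR ⊢
      subst hn0
      simp only [Finset.sum_empty, Nat.cast_zero] at hAR ⊢
      linear_combination (dimYD lam : ℂ) * hAR
    · have hne : lam ≠ ⊥ := by
        intro h
        rw [h] at hlam
        have hb : (⊥ : YoungDiagram).card = 0 := by
          simp [YoungDiagram.card, YoungDiagram.cells_bot]
        omega
      have hdim : ∑ κ ∈ downFinset lam, (dimYD κ : ℂ) = (dimYD lam : ℂ) := by
        rw [dim_rec hne]
        push_cast
        rfl
      rw [hdim]
      linear_combination (dimYD lam : ℂ) * hAR

end ZM

/-- For a Young diagram `λ` with `n = |λ|` boxes and arbitrary `u, v ∈ ℂ`: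
`∑_{Λ : λ ↗ Λ} (c(b) + u)(c(b) + v) dim Λ = (n + uv)(n + 1) dim λ`, where `b = Λ ∖ λ` and
`c(b) = j − i` is the content of the added box; equivalently (when the right-hand factor is
nonzero), the numbers `p_{u,v}(λ,Λ) = (c(b)+u)(c(b)+v) dim Λ / ((n+uv)(n+1) dim λ)` sum to 1. -/
theorem z_measure_transition_sum (lam : YoungDiagram) (n : ℕ) (hn : n = lam.card) (u v : ℂ) :
    (∑ᶠ Λ ∈ {Λ : YoungDiagram | YDCovers lam Λ},
      (∑ b ∈ Λ.cells \ lam.cells, (((b.2 : ℂ) - (b.1 : ℂ)) + u) * (((b.2 : ℂ) - (b.1 : ℂ)) + v)) *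
        (dimYD Λ : ℂ)
      = ((n : ℂ) + u * v) * ((n : ℂ) + 1) * (dimYD lam : ℂ)) ∧
    ((n : ℂ) + u * v ≠ 0 →
      ∑ᶠ Λ ∈ {Λ : YoungDiagram | YDCovers lam Λ},
        (∑ b ∈ Λ.cells \ lam.cells,
            (((b.2 : ℂ) - (b.1 : ℂ)) + u) * (((b.2 : ℂ) - (b.1 : ℂ)) + v)) * (dimYD Λ : ℂ) /
          (((n : ℂ) + u * v) * ((n : ℂ) + 1) * (dimYD lam : ℂ)) = 1) := by
  have hset : {Λ : YoungDiagram | YDCovers lam Λ} = ↑(ZM.upFinset lam) := by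
    ext Λ
    simp [ZM.mem_upFinset, Set.mem_setOf_eq]
  have hmain := ZM.main_identity u v n lam hn.symm
  have h1 : (∑ᶠ Λ ∈ {Λ : YoungDiagram | YDCovers lam Λ},
      (∑ b ∈ Λ.cells \ lam.cells, (((b.2 : ℂ) - (b.1 : ℂ)) + u) * (((b.2 : ℂ) - (b.1 : ℂ)) + v)) *
        (dimYD Λ : ℂ)) = ((n : ℂ) + u * v) * ((n : ℂ) + 1) * (dimYD lam : ℂ) := by
    rw [hset, finsum_mem_coe_finset]
    exact hmain
  refine ⟨h1, fun hnz => ?_⟩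
  have h2 : (∑ᶠ Λ ∈ {Λ : YoungDiagram | YDCovers lam Λ},
      (∑ b ∈ Λ.cells \ lam.cells, (((b.2 : ℂ) - (b.1 : ℂ)) + u) * (((b.2 : ℂ) - (b.1 : ℂ)) + v)) *
        (dimYD Λ : ℂ) / (((n : ℂ) + u * v) * ((n : ℂ) + 1) * (dimYD lam : ℂ)))
      = (∑ᶠ Λ ∈ {Λ : YoungDiagram | YDCovers lam Λ},
          (∑ b ∈ Λ.cells \ lam.cells,
            (((b.2 : ℂ) - (b.1 : ℂ)) + u) * (((b.2 : ℂ) - (b.1 : ℂ)) + v)) * (dimYD Λ : ℂ))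
        / (((n : ℂ) + u * v) * ((n : ℂ) + 1) * (dimYD lam : ℂ)) := by
    rw [hset, finsum_mem_coe_finset, finsum_mem_coe_finset, Finset.sum_div]
  rw [h2, h1]
  apply div_self
  have d1 : ((n : ℂ) + 1) ≠ 0 := Nat.cast_add_one_ne_zero n
  have d2 : (dimYD lam : ℂ) ≠ 0 := Nat.cast_ne_zero.mpr (ZM.dim_pos lam).ne'
  exact mul_ne_zero (mul_ne_zero hnz d1) d2
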